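/- Let n ≥ 3, let a₁, …, aₙ ≥ 2 be pairwise coprime integers, let k ≥ 1 be an integer coprime to each of a₁, …, a_{n−1}, and let b, b₁, …, bₙ be integers satisfying −b·(a₁⋯a_{n−1}·kaₙ) + Σ_{i<n} bᵢ·(a₁⋯a_{n−1}·kaₙ)/aᵢ + bₙ·(a₁⋯a_{n−1}) = 1. Let Γ' = Γ(a₁,…,a_{n−1}, kaₙ; b; b₁,…,bₙ) with generators x₁,…,xₙ, h, and let Γ = Γ(a₁,…,aₙ; kb; kb₁,…,kb_{n−1}, bₙ) with generators y₁,…,yₙ, h. Then there exists a group homomorphism φ : Γ' →* Γ with φ(h) = h^k and φ(xᵢ) = yᵢ for every i = 1, …, n. -/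

import Mathlib

/-- Relators of the Seifert homology-sphere presentation `Γ(a₁,…,aₙ; b; b₁,…,bₙ)`:
generators `x₁,…,xₙ` (indexed by `Fin n`) and `h` (indexed by `Unit`); relators are the
commutators `[xᵢ, h]`, the words `xᵢ^{aᵢ} h^{bᵢ}`, and the word `x₁⋯xₙ h^b`. -/
def seifertRels (n : ℕ) (a : Fin n → ℤ) (b : ℤ) (c : Fin n → ℤ) :
    Set (FreeGroup (Fin n ⊕ Unit)) :=
  (Set.range fun i : Fin n =>
      FreeGroup.of (Sum.inl i) * FreeGroup.of (Sum.inr ()) *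
        (FreeGroup.of (Sum.inl i))⁻¹ * (FreeGroup.of (Sum.inr ()))⁻¹) ∪
  (Set.range fun i : Fin n =>
      FreeGroup.of (Sum.inl i) ^ (a i) * FreeGroup.of (Sum.inr ()) ^ (c i)) ∪
  {(List.ofFn fun i : Fin n => FreeGroup.of (Sum.inl i)).prod *
      FreeGroup.of (Sum.inr ()) ^ b}

/-- The Seifert homology-sphere group `Γ(a₁,…,aₙ; b; b₁,…,bₙ)`, the fundamental group of
the Seifert fibered homology sphere `Σ(a₁,…,aₙ)`. -/
abbrev SeifertGroup (n : ℕ) (a : Fin n → ℤ) (b : ℤ) (c : Fin n → ℤ) : Type :=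
  PresentedGroup (seifertRels n a b c)

/-- Lemma 8.4 of the paper: with `Γ' = Γ(a₁,…,a_{n−1}, kaₙ; b; b₁,…,bₙ)` and
`Γ = Γ(a₁,…,aₙ; kb; kb₁,…,kb_{n−1}, bₙ)`, there is a homomorphism `φ : Γ' →* Γ` with
`φ(h) = h^k` and `φ(xᵢ) = yᵢ` for all `i`. -/
theorem seifert_cover_hom_exists
    (n : ℕ) (hn : 3 ≤ n) (a : Fin n → ℤ) (k : ℤ) (b : ℤ) (c : Fin n → ℤ)
    (h2 : ∀ i, 2 ≤ a i)
    (hcop : ∀ i j, i ≠ j → IsCoprime (a i) (a j))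
    (hk : 1 ≤ k)
    (hkcop : ∀ i : Fin n, i ≠ ⟨n - 1, by omega⟩ → IsCoprime k (a i))
    (heq : -b * ∏ i, Function.update a (⟨n - 1, by omega⟩ : Fin n)
          (k * a ⟨n - 1, by omega⟩) i +
        ∑ i, c i * ∏ j ∈ Finset.univ.erase i,
          Function.update a (⟨n - 1, by omega⟩ : Fin n) (k * a ⟨n - 1, by omega⟩) j = 1) :
    ∃ φ : SeifertGroup n
        (Function.update a (⟨n - 1, by omega⟩ : Fin n) (k * a ⟨n - 1, by omega⟩)) b c →*
      SeifertGroup n a (k * b)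
        (fun i => if i = (⟨n - 1, by omega⟩ : Fin n) then c i else k * c i),
      φ (PresentedGroup.of (Sum.inr ())) = (PresentedGroup.of (Sum.inr ())) ^ k ∧
      ∀ i : Fin n, φ (PresentedGroup.of (Sum.inl i)) = PresentedGroup.of (Sum.inl i) := by

  set i0 : Fin n := (⟨n - 1, by omega⟩ : Fin n) with hi0
  set c' : Fin n → ℤ := fun i => if i = i0 then c i else k * c i with hc'
  set R := seifertRels n a (k * b) c' with hR
  -- relations in the target group
  have hrel : ∀ r ∈ R, (QuotientGroup.mk r : PresentedGroup R) = 1 := fun r hr =>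
    (QuotientGroup.eq_one_iff r).2 (Subgroup.subset_normalClosure hr)
  set H : PresentedGroup R := PresentedGroup.of (Sum.inr ()) with hH
  set Y : Fin n → PresentedGroup R := fun i => PresentedGroup.of (Sum.inl i) with hY
  have hcomm : ∀ i, Commute (Y i) H := by
    intro i
    have h1 := hrel _ (Or.inl (Or.inl ⟨i, rfl⟩))
    have h2 : Y i * H * (Y i)⁻¹ * H⁻¹ = 1 := by
      exact h1
    have h3 : Y i * H * (Y i)⁻¹ = H := by
      have := mul_eq_one_iff_eq_inv.mp h2
      simpa using this
    have : Y i * H = H * Y i := by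
      have := mul_inv_eq_iff_eq_mul.mp h3
      simpa using this
    exact this
  have hpow : ∀ i, Y i ^ (a i) * H ^ (c' i) = 1 := by
    intro i
    have h1 := hrel _ (Or.inl (Or.inr ⟨i, rfl⟩))
    exact h1
  have hprod : (List.ofFn Y).prod * H ^ (k * b) = 1 := by
    have h1 := hrel _ (Or.inr rfl)
    have h2 : ((QuotientGroup.mk' (Subgroup.normalClosure R))
        ((List.ofFn fun i : Fin n => FreeGroup.of (Sum.inl i)).prod
          * FreeGroup.of (Sum.inr ()) ^ (k * b))) = 1 := h1
    rw [map_mul, map_zpow, map_list_prod, List.map_ofFn] at h2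
    exact h2
  -- the map on generators
  set f : (Fin n ⊕ Unit) → PresentedGroup R := Sum.elim Y (fun _ => H ^ k) with hf
  have hmain : ∀ r ∈ seifertRels n
      (Function.update a i0 (k * a i0)) b c, FreeGroup.lift f r = 1 := by
    rintro r ((⟨i, rfl⟩ | ⟨i, rfl⟩) | rfl)
    · have hc := (hcomm i).zpow_right k
      simp only [map_mul, map_inv, FreeGroup.lift_apply_of, hf, Sum.elim_inl, Sum.elim_inr]
      rw [hc.eq]
      group
    · simp only [map_mul, map_zpow, FreeGroup.lift_apply_of, hf, Sum.elim_inl, Sum.elim_inr]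
      by_cases hi : i = i0
      · subst hi
        have hx : Y i0 ^ a i0 * H ^ c i0 = 1 := by
          have := hpow i0
          rw [hc'] at this
          simpa using this
        rw [Function.update_self, ← zpow_mul]
        calc Y i0 ^ (k * a i0) * H ^ (k * c i0)
            = (Y i0 ^ a i0) ^ k * (H ^ c i0) ^ k := by
              rw [mul_comm k (a i0), mul_comm k (c i0), zpow_mul, zpow_mul]
          _ = (Y i0 ^ a i0 * H ^ c i0) ^ k :=
              (((hcomm i0).zpow_zpow (a i0) (c i0)).mul_zpow k).symm
          _ = 1 := by rw [hx, one_zpow]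
      · rw [Function.update_of_ne hi, ← zpow_mul]
        have := hpow i
        rw [hc'] at this
        simpa [if_neg hi] using this
    · simp only [map_mul, map_zpow, map_list_prod, List.map_ofFn, FreeGroup.lift_apply_of,
        hf, Sum.elim_inl, Sum.elim_inr]
      rw [← zpow_mul]
      have : ((FreeGroup.lift f) ∘ fun i : Fin n => FreeGroup.of (Sum.inl i)) = Y := by
        funext i; simp [hf]
      rw [this]
      exact hprod
  refine ⟨PresentedGroup.toGroup hmain, ?_, ?_⟩
  · rw [PresentedGroup.toGroup.of]
    simp [hf]
  · intro i
    rw [PresentedGroup.toGroup.of]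
    simp [hf, hY]
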